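/- For two-level thermalization at inverse temperature β, the von Neumann entropy change dominates β times the expected energy change: if a two-level probability pair (λ₁, λ₂) with λ₁+λ₂ = λ₁₂ fixed and energies E₁ ≥ E₂ evolves so that λ₁/λ₂ moves (weakly) closer to e^{-β(E₁-E₂)}, then ΔS ≥ β·Δ⟨E⟩, where S = -λ₁ ln λ₁ - λ₂ ln λ₂ and ⟨E⟩ = λ₁E₁ + λ₂E₂. -/

import Mathlib

/-- Two-level thermalization entropy-increase law: if the occupation `λ₁`
(of the upper level, with `λ₁ + λ₂ = λ₁₂` fixed) moves weakly closer to its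
thermal value `λ₁ᵀ`, then `ΔS ≥ β·Δ⟨E⟩`. -/
theorem two_level_entropy_increase
    (β E₁ E₂ lam12 lamT lam lam' : ℝ)
    (hβ : 0 < β) (hE : E₂ ≤ E₁)
    (h12a : 0 < lam12) (h12b : lam12 ≤ 1)
    (hlam : 0 < lam) (hlam' : lam < lam12)
    (hlam'' : 0 < lam') (hlam''' : lam' < lam12)
    (hT0 : 0 < lamT) (hT1 : lamT < lam12)
    -- the thermal value: λ₁ᵀ/(λ₁₂ - λ₁ᵀ) = e^{-β(E₁-E₂)}
    (hThermal : lamT / (lam12 - lamT) = Real.exp (-β * (E₁ - E₂)))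
    -- λ₁' lies (weakly) between λ₁ and λ₁ᵀ
    (hBetween : (lam ≤ lam' ∧ lam' ≤ lamT) ∨ (lamT ≤ lam' ∧ lam' ≤ lam)) :
    (-lam' * Real.log lam' - (lam12 - lam') * Real.log (lam12 - lam'))
      - (-lam * Real.log lam - (lam12 - lam) * Real.log (lam12 - lam))
      ≥ β * ((lam' - lam) * (E₁ - E₂)) := by
  set c := β * (E₁ - E₂) with hc
  set g : ℝ → ℝ := fun x => -(x * Real.log x) - (lam12 - x) * Real.log (lam12 - x) - c * x with hg
  -- c = log (lam12 - lamT) - log lamT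
  have hTlt : lamT / (lam12 - lamT) > 0 := div_pos hT0 (by linarith)
  have hlogT : Real.log lamT - Real.log (lam12 - lamT) = -c := by
    have := congrArg Real.log hThermal
    rwa [Real.log_div (ne_of_gt hT0) (by linarith : lam12 - lamT ≠ 0),
      Real.log_exp, neg_mul] at this
  have hderiv : ∀ x ∈ Set.Ioo (0:ℝ) lam12,
      HasDerivAt g (Real.log (lam12 - x) - Real.log x - c) x := by
    intro x hx
    have h1 : HasDerivAt (fun y : ℝ => y * Real.log y) (Real.log x + 1) x :=
      Real.hasDerivAt_mul_log (ne_of_gt hx.1)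
    have h2 : HasDerivAt (fun y : ℝ => lam12 - y) (-1) x := by
      simpa using (hasDerivAt_id' x).const_sub lam12
    have h3 : HasDerivAt (fun y : ℝ => y * Real.log y)
        (Real.log (lam12 - x) + 1) (lam12 - x) :=
      Real.hasDerivAt_mul_log (by have := hx.2; intro h; linarith [hx.2, h] )
    have h4 := h3.comp x h2
    have h5 : HasDerivAt (fun y : ℝ => c * y) c x := by
      simpa using (hasDerivAt_id x).const_mul c
    have := (h1.neg.sub h4).sub h5
    rw [show Real.log (lam12 - x) - Real.log x - c = -(Real.log x + 1) - (Real.log (lam12 - x) + 1) * -1 - c by ring]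
    exact this
  -- key monotonicity
  have key : g lam ≤ g lam' := by
    rcases hBetween with ⟨hab, hbc⟩ | ⟨hab, hbc⟩
    · -- increasing on [lam, lamT]
      have hmono : MonotoneOn g (Set.Icc lam lamT) := by
        apply monotoneOn_of_deriv_nonneg (convex_Icc _ _)
        · intro x hx
          exact ((hderiv x ⟨lt_of_lt_of_le hlam hx.1, lt_of_le_of_lt hx.2 hT1⟩).differentiableAt).continuousAt.continuousWithinAt
        · intro x hx
          rw [interior_Icc] at hx
          exact ((hderiv x ⟨lt_trans hlam hx.1, lt_trans hx.2 hT1⟩).differentiableAt).differentiableWithinAt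
        · intro x hx
          rw [interior_Icc] at hx
          have hx0 : 0 < x := lt_trans hlam hx.1
          have hx1 : x < lam12 := lt_trans hx.2 hT1
          rw [(hderiv x ⟨hx0, hx1⟩).deriv]
          have h6 : Real.log x ≤ Real.log lamT := Real.log_le_log hx0 hx.2.le
          have h7 : Real.log (lam12 - lamT) ≤ Real.log (lam12 - x) :=
            Real.log_le_log (by linarith) (by linarith [hx.1, hx.2])
          linarith
      exact hmono (Set.mem_Icc.2 ⟨le_refl _, le_trans hab hbc⟩)
        (Set.mem_Icc.2 ⟨hab, hbc⟩) hab
    · -- decreasing on [lamT, lam]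
      have hmono : AntitoneOn g (Set.Icc lamT lam) := by
        apply antitoneOn_of_deriv_nonpos (convex_Icc _ _)
        · intro x hx
          exact ((hderiv x ⟨lt_of_lt_of_le hT0 hx.1, lt_of_le_of_lt hx.2 hlam'⟩).differentiableAt).continuousAt.continuousWithinAt
        · intro x hx
          rw [interior_Icc] at hx
          exact ((hderiv x ⟨lt_trans hT0 hx.1, lt_trans hx.2 hlam'⟩).differentiableAt).differentiableWithinAt
        · intro x hx
          rw [interior_Icc] at hx
          have hx0 : 0 < x := lt_trans hT0 hx.1
          have hx1 : x < lam12 := lt_trans hx.2 hlam'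
          rw [(hderiv x ⟨hx0, hx1⟩).deriv]
          have h6 : Real.log lamT ≤ Real.log x := Real.log_le_log hT0 hx.1.le
          have h7 : Real.log (lam12 - x) ≤ Real.log (lam12 - lamT) :=
            Real.log_le_log (by linarith) (by linarith [hx.1, hx.2])
          linarith
      exact hmono (Set.mem_Icc.2 ⟨hab, hbc⟩)
        (Set.mem_Icc.2 ⟨le_trans hab hbc, le_refl _⟩) hbc
  simp only [hg] at key
  have h2 : β * ((lam' - lam) * (E₁ - E₂)) = c * lam' - c * lam := by rw [hc]; ring
  rw [ge_iff_le, h2]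
  linarith
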